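/- Fix real numbers 0 < β < 1 and 0 < γ < 1. Let σ_γ(x) denote the fractional part of γ/x (for x ≠ 0), and let τ_β(x) denote the unique y ∈ (−1,1] with −β/x − y ∈ 2ℤ (for x ≠ 0). For N ≥ 1, let F_{γ,N} be the set of x ∈ (0,γ) such that the iterates σ_γⁿ(x) are defined and lie in (0,γ) for n = 1, …, N−1, and let E_{β,N} be the set of x ∈ (−β,β), x ≠ 0, such that the iterates τ_βⁿ(x) are defined (the orbit avoids 0) and lie in (−β,β) for n = 1, …, N−1. Then: (a) ∫_{F_{γ,N}} dt/(1+t) ≤ (2γ/(1+γ))^N · log 2; (b) ∫_{E_{β,N}} dt/(1−t²) ≤ 4β^N/(1−β); (c) the Lebesgue measures of the wandering sets F_{γ,∞} := ⋂_{N≥1} F_{γ,N} and E_{β,∞} := ⋂_{N≥1} E_{β,N} are zero. -/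

import Mathlib

open MeasureTheory

/-- The Gauss-type map `σ_γ(x) = {γ/x} mod 1`. -/
noncomputable def gaussMap (γ : ℝ) (x : ℝ) : ℝ := Int.fract (γ / x)

/-- The Gauss-type map `τ_β(x)`: the unique `y ∈ (-1,1]` with `-β/x - y ∈ 2ℤ`. -/
noncomputable def tauMap (β : ℝ) (x : ℝ) : ℝ :=
  (-β / x) - 2 * ⌈((-β / x) - 1) / 2⌉

/-- The set of points of `(0,γ)` whose first `N-1` iterates under `σ_γ`
stay in `(0,γ)`. -/
def Fset (γ : ℝ) (N : ℕ) : Set ℝ :=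
  {x | x ∈ Set.Ioo 0 γ ∧
    ∀ n : ℕ, 1 ≤ n → n ≤ N - 1 → (gaussMap γ)^[n] x ∈ Set.Ioo 0 γ}

/-- The set of points of `(-β,β) \ {0}` whose orbit under `τ_β` avoids `0` and
whose first `N-1` iterates stay in `(-β,β)`. -/
def Eset (β : ℝ) (N : ℕ) : Set ℝ :=
  {x | x ∈ Set.Ioo (-β) β ∧
    ∀ n : ℕ, n ≤ N - 1 →
      (tauMap β)^[n] x ≠ 0 ∧ (1 ≤ n → (tauMap β)^[n] x ∈ Set.Ioo (-β) β)}

lemma lintegral_image_1d {s : Set ℝ} {f f' : ℝ → ℝ} (hs : MeasurableSet s)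
    (hf' : ∀ x ∈ s, HasDerivWithinAt f (f' x) s x) (hf : Set.InjOn f s) (g : ℝ → ENNReal) :
    ∫⁻ x in f '' s, g x = ∫⁻ x in s, ENNReal.ofReal |f' x| * g (f x) := by
  simpa only [ContinuousLinearMap.det_toSpanSingleton] using
    lintegral_image_eq_lintegral_abs_det_fderiv_mul volume hs
      (fun x hx => (hf' x hx).hasFDerivWithinAt) hf g

lemma tele_tsum_le (f : ℕ → ℝ) (hmono : ∀ n, f (n+1) ≤ f n) (hpos : ∀ n, 0 ≤ f n) :
    ∑' n, ENNReal.ofReal (f n - f (n+1)) ≤ ENNReal.ofReal (f 0) := by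
  rw [ENNReal.tsum_eq_iSup_sum]
  refine iSup_le fun s => ?_
  calc ∑ i ∈ s, ENNReal.ofReal (f i - f (i+1))
      ≤ ∑ i ∈ Finset.range (s.sup id + 1), ENNReal.ofReal (f i - f (i+1)) := by
        apply Finset.sum_le_sum_of_subset
        intro i hi
        exact Finset.mem_range.2 (Nat.lt_succ_of_le (Finset.le_sup (f := id) hi))
    _ = ENNReal.ofReal (∑ i ∈ Finset.range (s.sup id + 1), (f i - f (i+1))) := by
        rw [ENNReal.ofReal_sum_of_nonneg]
        intro i _; linarith [hmono i]
    _ ≤ ENNReal.ofReal (f 0) := by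
        rw [Finset.sum_range_sub']
        exact ENNReal.ofReal_le_ofReal (by linarith [hpos (s.sup id + 1)])

lemma sumA (γ : ℝ) (hγ0 : 0 < γ) (hγ1 : γ < 1) (y : ℝ) (hy0 : 0 ≤ y) :
    ∑' k : ℕ, ENNReal.ofReal (γ / (((k:ℝ)+1+y) * ((k:ℝ)+1+y+γ)))
      ≤ ENNReal.ofReal (2*γ/(1+γ)) * ENNReal.ofReal (1/(1+y)) := by
  have key : ∀ k : ℕ, γ / (((k:ℝ)+1+y) * ((k:ℝ)+1+y+γ))
      ≤ 2*γ/(1+γ) * (1/((k:ℝ)+1+y) - 1/((k:ℝ)+1+1+y)) := by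
    intro k
    set t : ℝ := (k:ℝ)+1+y with ht
    have ht1 : 1 ≤ t := by have : (0:ℝ) ≤ (k:ℝ) := Nat.cast_nonneg k; simp [ht]; linarith
    have h2 : 1/t - 1/((k:ℝ)+1+1+y) = 1/(t*(t+1)) := by
      have : (k:ℝ)+1+1+y = t + 1 := by rw [ht]; ring
      rw [this]; field_simp; ring
    rw [h2, div_mul_div_comm, mul_one, div_le_div_iff₀ (by positivity) (by positivity)]
    nlinarith [mul_nonneg (mul_nonneg (mul_nonneg hγ0.le (by linarith : (0:ℝ) ≤ t))
      (by linarith : (0:ℝ) ≤ t - 1)) (by linarith : (0:ℝ) ≤ 1 - γ)]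
  have hc : (0:ℝ) ≤ 2*γ/(1+γ) := by positivity
  calc ∑' k : ℕ, ENNReal.ofReal (γ / (((k:ℝ)+1+y) * ((k:ℝ)+1+y+γ)))
      ≤ ∑' k : ℕ, ENNReal.ofReal (2*γ/(1+γ) * (1/((k:ℝ)+1+y) - 1/((k:ℝ)+1+1+y))) :=
        ENNReal.tsum_le_tsum fun k => ENNReal.ofReal_le_ofReal (key k)
    _ = ENNReal.ofReal (2*γ/(1+γ)) *
          ∑' k : ℕ, ENNReal.ofReal ((1/((k:ℝ)+1+y) - 1/((k:ℝ)+1+1+y))) := by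
        rw [← ENNReal.tsum_mul_left]
        refine tsum_congr fun k => ?_
        rw [← ENNReal.ofReal_mul hc]
    _ ≤ ENNReal.ofReal (2*γ/(1+γ)) * ENNReal.ofReal (1/(1+y)) := by
        gcongr
        have h := tele_tsum_le (fun k : ℕ => 1/((k:ℝ)+1+y))
          (fun n => by
            apply one_div_le_one_div_of_le (by positivity)
            push_cast; linarith)
          (fun n => by positivity)
        simp only [Nat.cast_zero, zero_add] at h
        refine le_trans (le_of_eq (tsum_congr fun k => ?_)) h
        congr 2
        push_cast; ring

lemma preA (γ : ℝ) (hγ0 : 0 < γ) (A : Set ℝ) :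
    {x | x ∈ Set.Ioo 0 γ ∧ gaussMap γ x ∈ A}
      ⊆ ⋃ k : ℕ, (fun y => γ/((k:ℝ)+1+y)) '' A := by
  rintro x ⟨⟨hx0, hxγ⟩, hσ⟩
  have hq : 1 < γ / x := (one_lt_div hx0).2 hxγ
  have hn1 : 1 ≤ ⌊γ/x⌋ := Int.le_floor.2 (by exact_mod_cast hq.le)
  refine Set.mem_iUnion.2 ⟨(⌊γ/x⌋ - 1).toNat, ⟨gaussMap γ x, hσ, ?_⟩⟩
  have hcast : ((⌊γ/x⌋ - 1).toNat : ℝ) + 1 + gaussMap γ x = γ/x := by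
    have h1 : ((⌊γ/x⌋ - 1).toNat : ℤ) = ⌊γ/x⌋ - 1 := Int.toNat_of_nonneg (by omega)
    have h2 : ((⌊γ/x⌋ - 1).toNat : ℝ) = (⌊γ/x⌋ : ℝ) - 1 := by
      exact_mod_cast congrArg (Int.cast : ℤ → ℝ) h1
    rw [h2, gaussMap, Int.fract]; ring
  show γ / (((⌊γ/x⌋ - 1).toNat : ℝ) + 1 + gaussMap γ x) = x
  rw [hcast]
  rw [div_div_eq_mul_div, mul_comm, mul_div_assoc, div_self (ne_of_gt hγ0), mul_one]

lemma branchA (γ : ℝ) (hγ0 : 0 < γ) (A : Set ℝ) (hA : MeasurableSet A)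
    (hA1 : A ⊆ Set.Ioo 0 1) (k : ℕ) :
    ∫⁻ x in (fun y => γ/((k:ℝ)+1+y)) '' A, ENNReal.ofReal (1/(1+x))
      = ∫⁻ y in A, ENNReal.ofReal (γ / (((k:ℝ)+1+y) * ((k:ℝ)+1+y+γ))) := by
  have hden : ∀ y ∈ A, (0:ℝ) < (k:ℝ)+1+y := by
    intro y hy
    have := (hA1 hy).1
    have : (0:ℝ) ≤ (k:ℝ) := Nat.cast_nonneg k
    linarith [(hA1 hy).1]
  have hderiv : ∀ y ∈ A, HasDerivWithinAt (fun y => γ/((k:ℝ)+1+y))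
      (-γ/(((k:ℝ)+1+y)^2)) A y := by
    intro y hy
    have h := (hasDerivAt_const y γ).div ((hasDerivAt_id y).const_add ((k:ℝ)+1))
      (ne_of_gt (hden y hy))
    simp only [id] at h
    have heq : (0 * ((k:ℝ)+1+y) - γ * 1) / ((k:ℝ)+1+y)^2 = -γ/(((k:ℝ)+1+y)^2) := by ring
    rw [heq] at h
    exact h.hasDerivWithinAt
  have hinj : Set.InjOn (fun y => γ/((k:ℝ)+1+y)) A := by
    intro y1 h1 y2 h2 h
    have d1 := ne_of_gt (hden y1 h1)
    have d2 := ne_of_gt (hden y2 h2)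
    simp only at h
    rw [div_eq_div_iff d1 d2] at h
    have := mul_left_cancel₀ (ne_of_gt hγ0) h
    linarith
  rw [lintegral_image_1d hA hderiv hinj]
  refine setLIntegral_congr_fun hA (fun y hy => ?_)
  have hs := hden y hy
  have habs : |-γ/(((k:ℝ)+1+y)^2)| = γ/(((k:ℝ)+1+y)^2) := by
    rw [abs_div, abs_neg, abs_of_pos hγ0, abs_of_pos (by positivity)]
  rw [habs, ← ENNReal.ofReal_mul (by positivity)]
  congr 1
  have h1γ : (0:ℝ) < (k:ℝ)+1+y+γ := by linarith
  field_simp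

lemma keyA (γ : ℝ) (hγ0 : 0 < γ) (hγ1 : γ < 1) (A : Set ℝ) (hA : MeasurableSet A)
    (hA1 : A ⊆ Set.Ioo 0 1) :
    ∫⁻ x in {x | x ∈ Set.Ioo 0 γ ∧ gaussMap γ x ∈ A}, ENNReal.ofReal (1/(1+x))
      ≤ ENNReal.ofReal (2*γ/(1+γ)) * ∫⁻ y in A, ENNReal.ofReal (1/(1+y)) := by
  have hmeask : ∀ k : ℕ, Measurable (fun y : ℝ =>
      ENNReal.ofReal (γ / (((k:ℝ)+1+y) * ((k:ℝ)+1+y+γ)))) := by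
    intro k
    apply Measurable.ennreal_ofReal
    exact measurable_const.div (((measurable_const.add measurable_id).mul
      ((measurable_const.add measurable_id).add_const γ)))
  calc ∫⁻ x in {x | x ∈ Set.Ioo 0 γ ∧ gaussMap γ x ∈ A}, ENNReal.ofReal (1/(1+x))
      ≤ ∫⁻ x in ⋃ k : ℕ, (fun y => γ/((k:ℝ)+1+y)) '' A, ENNReal.ofReal (1/(1+x)) :=
        lintegral_mono_set (preA γ hγ0 A)
    _ ≤ ∑' k : ℕ, ∫⁻ x in (fun y => γ/((k:ℝ)+1+y)) '' A, ENNReal.ofReal (1/(1+x)) :=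
        lintegral_iUnion_le _ _
    _ = ∑' k : ℕ, ∫⁻ y in A, ENNReal.ofReal (γ / (((k:ℝ)+1+y) * ((k:ℝ)+1+y+γ))) :=
        tsum_congr fun k => branchA γ hγ0 A hA hA1 k
    _ = ∫⁻ y in A, ∑' k : ℕ, ENNReal.ofReal (γ / (((k:ℝ)+1+y) * ((k:ℝ)+1+y+γ))) :=
        (lintegral_tsum fun k => (hmeask k).aemeasurable).symm
    _ ≤ ∫⁻ y in A, ENNReal.ofReal (2*γ/(1+γ)) * ENNReal.ofReal (1/(1+y)) := by
        refine lintegral_mono_ae ((ae_restrict_iff' hA).2 (ae_of_all _ fun y hy => ?_))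
        exact sumA γ hγ0 hγ1 y (hA1 hy).1.le
    _ = ENNReal.ofReal (2*γ/(1+γ)) * ∫⁻ y in A, ENNReal.ofReal (1/(1+y)) :=
        lintegral_const_mul' _ _ ENNReal.ofReal_ne_top

lemma measurable_gaussMap (γ : ℝ) : Measurable (gaussMap γ) :=
  (measurable_const.div measurable_id).fract

lemma measFset (γ : ℝ) (N : ℕ) : MeasurableSet (Fset γ N) := by
  have : Fset γ N = Set.Ioo 0 γ ∩ ⋂ (n : ℕ), ⋂ (_ : 1 ≤ n), ⋂ (_ : n ≤ N-1),
      (gaussMap γ)^[n] ⁻¹' (Set.Ioo 0 γ) := by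
    ext x
    simp only [Fset, Set.mem_setOf_eq, Set.mem_inter_iff, Set.mem_iInter, Set.mem_preimage]
  rw [this]
  exact measurableSet_Ioo.inter (MeasurableSet.iInter fun n => MeasurableSet.iInter fun _ =>
    MeasurableSet.iInter fun _ => ((measurable_gaussMap γ).iterate n) measurableSet_Ioo)

lemma Fset_subset (γ : ℝ) (N : ℕ) : Fset γ N ⊆ Set.Ioo 0 γ := fun _ hx => hx.1

lemma Fset_one (γ : ℝ) : Fset γ 1 = Set.Ioo 0 γ := by
  ext x
  simp only [Fset, Set.mem_setOf_eq]
  constructor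
  · exact fun h => h.1
  · exact fun h => ⟨h, fun n h1 h2 => by omega⟩

lemma Fset_succ (γ : ℝ) (N : ℕ) (hN : 1 ≤ N) :
    Fset γ (N+1) = {x | x ∈ Set.Ioo 0 γ ∧ gaussMap γ x ∈ Fset γ N} := by
  ext x
  simp only [Fset, Set.mem_setOf_eq]
  constructor
  · rintro ⟨hx, h⟩
    have h1 : gaussMap γ x ∈ Set.Ioo 0 γ := by simpa using h 1 le_rfl (by omega)
    refine ⟨hx, h1, fun n hn1 hn2 => ?_⟩
    rw [← Function.iterate_succ_apply]
    exact h (n+1) (by omega) (by omega)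
  · rintro ⟨hx, ⟨h1, h⟩⟩
    refine ⟨hx, fun n hn1 hn2 => ?_⟩
    obtain ⟨m, rfl⟩ : ∃ m, n = m + 1 := ⟨n-1, by omega⟩
    rw [Function.iterate_succ_apply]
    rcases Nat.eq_zero_or_pos m with rfl | hm
    · simpa using h1
    · exact h m hm (by omega)

lemma lint_log : ∫⁻ t in Set.Ioo (0:ℝ) 1, ENNReal.ofReal (1/(1+t))
    = ENNReal.ofReal (Real.log 2) := by
  have hcont : ContinuousOn (fun t : ℝ => 1/(1+t)) (Set.Icc 0 1) := by
    apply ContinuousOn.div continuousOn_const (by fun_prop)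
    intro x hx
    have := hx.1
    intro h; linarith
  have hint : IntegrableOn (fun t : ℝ => 1/(1+t)) (Set.Ioo 0 1) :=
    (hcont.integrableOn_Icc).mono_set Set.Ioo_subset_Icc_self
  rw [← ofReal_integral_eq_lintegral_ofReal hint
    ((ae_restrict_iff' measurableSet_Ioo).2 (ae_of_all _ fun x hx => by
      have := hx.1; positivity))]
  congr 1
  rw [← integral_Ioc_eq_integral_Ioo, ← intervalIntegral.integral_of_le zero_le_one]
  have h1 := intervalIntegral.integral_comp_add_left (a := (0:ℝ)) (b := 1) (fun u => 1/u) 1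
  simp only [add_zero] at h1
  rw [h1]
  rw [integral_one_div (by
    intro h
    rw [Set.mem_uIcc] at h
    rcases h with h | h <;> linarith [h.1, h.2])]
  norm_num

lemma boundA (γ : ℝ) (hγ0 : 0 < γ) (hγ1 : γ < 1) :
    ∀ N : ℕ, 1 ≤ N → ∫⁻ t in Fset γ N, ENNReal.ofReal (1/(1+t))
      ≤ ENNReal.ofReal (2*γ/(1+γ)) ^ N * ENNReal.ofReal (Real.log 2) := by
  intro N
  induction N with
  | zero => omega
  | succ N ih =>
    intro _
    rcases Nat.eq_zero_or_pos N with rfl | hN'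
    · rw [Fset_one]
      have hsub : Set.Ioo 0 γ ⊆ {x | x ∈ Set.Ioo 0 γ ∧ gaussMap γ x ∈ Set.Ioo 0 1}
          ∪ Set.range (fun n : ℤ => γ/(n:ℝ)) := by
        intro x hx
        rcases eq_or_ne (gaussMap γ x) 0 with h0 | h0
        · right
          refine ⟨⌊γ/x⌋, ?_⟩
          have hfl : (⌊γ/x⌋ : ℝ) = γ/x := by
            have : Int.fract (γ/x) = 0 := h0
            rw [Int.fract] at this
            linarith
          show γ / ((⌊γ/x⌋ : ℝ)) = x
          rw [hfl, div_div_eq_mul_div, mul_comm, mul_div_assoc, div_self (ne_of_gt hγ0),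
            mul_one]
        · left
          exact ⟨hx, lt_of_le_of_ne (Int.fract_nonneg _) (Ne.symm h0), Int.fract_lt_one _⟩
      calc ∫⁻ t in Set.Ioo 0 γ, ENNReal.ofReal (1/(1+t))
          ≤ ∫⁻ t in ({x | x ∈ Set.Ioo 0 γ ∧ gaussMap γ x ∈ Set.Ioo 0 1}
              ∪ Set.range (fun n : ℤ => γ/(n:ℝ))), ENNReal.ofReal (1/(1+t)) :=
            lintegral_mono_set hsub
        _ ≤ (∫⁻ t in {x | x ∈ Set.Ioo 0 γ ∧ gaussMap γ x ∈ Set.Ioo 0 1},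
              ENNReal.ofReal (1/(1+t)))
            + ∫⁻ t in Set.range (fun n : ℤ => γ/(n:ℝ)), ENNReal.ofReal (1/(1+t)) :=
            lintegral_union_le _ _ _
        _ ≤ ENNReal.ofReal (2*γ/(1+γ)) * ENNReal.ofReal (Real.log 2) + 0 := by
            refine add_le_add ?_ (le_of_eq ?_)
            · have := keyA γ hγ0 hγ1 (Set.Ioo 0 1) measurableSet_Ioo subset_rfl
              rwa [lint_log] at this
            · exact setLIntegral_measure_zero _ _
                ((Set.countable_range _).measure_zero _)
        _ = ENNReal.ofReal (2*γ/(1+γ)) ^ 1 * ENNReal.ofReal (Real.log 2) := by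
            rw [add_zero, pow_one]
    · rw [Fset_succ γ N hN']
      calc ∫⁻ t in {x | x ∈ Set.Ioo 0 γ ∧ gaussMap γ x ∈ Fset γ N}, ENNReal.ofReal (1/(1+t))
          ≤ ENNReal.ofReal (2*γ/(1+γ)) * ∫⁻ y in Fset γ N, ENNReal.ofReal (1/(1+y)) :=
            keyA γ hγ0 hγ1 _ (measFset γ N)
              ((Fset_subset γ N).trans (Set.Ioo_subset_Ioo le_rfl hγ1.le))
        _ ≤ ENNReal.ofReal (2*γ/(1+γ)) *
              (ENNReal.ofReal (2*γ/(1+γ)) ^ N * ENNReal.ofReal (Real.log 2)) := by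
            gcongr
            exact ih hN'
        _ = ENNReal.ofReal (2*γ/(1+γ)) ^ (N+1) * ENNReal.ofReal (Real.log 2) := by
            rw [pow_succ]; ring

lemma preB (β : ℝ) (hβ0 : 0 < β) (A : Set ℝ) :
    {x | x ∈ Set.Ioo (-β) β ∧ x ≠ 0 ∧ tauMap β x ∈ A}
      ⊆ ⋃ k : ℕ, ((fun y => -β/(y+(2*(k:ℝ)+2))) '' A ∪ (fun y => -β/(y-(2*(k:ℝ)+2))) '' A) := by
  rintro x ⟨hx, hx0, hτ⟩
  set u : ℝ := -β / x with hu
  set m : ℤ := ⌈(u - 1) / 2⌉ with hm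
  have hxabs : |x| < β := abs_lt.2 ⟨hx.1, hx.2⟩
  have hxpos : 0 < |x| := abs_pos.2 hx0
  have huabs : 1 < |u| := by
    rw [hu, abs_div, abs_neg, abs_of_pos hβ0]
    exact (one_lt_div hxpos).2 hxabs
  have hub1 : u - 1 ≤ 2 * m := by
    have := Int.le_ceil ((u - 1) / 2)
    rw [← hm] at this
    linarith
  have hub2 : 2 * (m:ℝ) < u + 1 := by
    have := Int.ceil_lt_add_one ((u - 1) / 2)
    rw [← hm] at this
    linarith
  have hmne : m ≠ 0 := by
    intro h
    rw [h] at hub1 hub2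
    push_cast at hub1 hub2
    have : |u| ≤ 1 := abs_le.2 ⟨by linarith, by linarith⟩
    linarith
  have hxeq : x = -β / (tauMap β x + 2 * m) := by
    have h1 : tauMap β x + 2 * m = u := by rw [tauMap, hu, hm]; ring
    rw [h1, hu]
    field_simp
  rcases lt_or_gt_of_ne hmne with hneg | hpos
  · -- m ≤ -1 : use negative branch with k = (-m-1).toNat
    refine Set.mem_iUnion.2 ⟨(-m-1).toNat, Or.inr ⟨tauMap β x, hτ, ?_⟩⟩
    have hk : ((-m-1).toNat : ℝ) = -(m:ℝ) - 1 := by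
      have : ((-m-1).toNat : ℤ) = -m-1 := Int.toNat_of_nonneg (by omega)
      exact_mod_cast congrArg (Int.cast : ℤ → ℝ) this
    show -β / (tauMap β x - (2*((-m-1).toNat : ℝ)+2)) = x
    rw [hk]
    have heq : tauMap β x - (2*(-(m:ℝ)-1)+2) = tauMap β x + 2*m := by ring
    rw [heq]
    exact hxeq.symm
  · refine Set.mem_iUnion.2 ⟨(m-1).toNat, Or.inl ⟨tauMap β x, hτ, ?_⟩⟩
    have hk : ((m-1).toNat : ℝ) = (m:ℝ) - 1 := by
      have : ((m-1).toNat : ℤ) = m-1 := Int.toNat_of_nonneg (by omega)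
      exact_mod_cast congrArg (Int.cast : ℤ → ℝ) this
    show -β / (tauMap β x + (2*((m-1).toNat : ℝ)+2)) = x
    rw [hk]
    have heq : tauMap β x + (2*((m:ℝ)-1)+2) = tauMap β x + 2*m := by ring
    rw [heq]
    exact hxeq.symm

lemma sumB_half (β : ℝ) (hβ0 : 0 < β) (hβ1 : β < 1) (z : ℝ) (hz : -1 < z) :
    ∑' k : ℕ, ENNReal.ofReal (β/((z+(2*(k:ℝ)+2))^2 - β^2))
      ≤ ENNReal.ofReal (β/2 * (1/(1+z))) := by
  have key : ∀ k : ℕ, β/((z+(2*(k:ℝ)+2))^2 - β^2)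
      ≤ β/2 * (1/(2*(k:ℝ)+1+z) - 1/(2*((k:ℝ)+1)+1+z)) := by
    intro k
    have hk0 : (0:ℝ) ≤ (k:ℝ) := Nat.cast_nonneg k
    have h1 : (0:ℝ) < 2*(k:ℝ)+1+z := by linarith
    have h2 : (0:ℝ) < 2*((k:ℝ)+1)+1+z := by linarith
    have hposq : (0:ℝ) < (z+(2*(k:ℝ)+2))^2 - 1 := by nlinarith
    have hle : (z+(2*(k:ℝ)+2))^2 - 1 ≤ (z+(2*(k:ℝ)+2))^2 - β^2 := by nlinarith
    have hstep : β/2 * (1/(2*(k:ℝ)+1+z) - 1/(2*((k:ℝ)+1)+1+z))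
        = β/((z+(2*(k:ℝ)+2))^2 - 1) := by
      rw [div_sub_div _ _ (ne_of_gt h1) (ne_of_gt h2)]
      rw [div_mul_div_comm]
      rw [div_eq_div_iff (by positivity) (ne_of_gt hposq)]
      ring
    rw [hstep]
    apply div_le_div_of_nonneg_left hβ0.le hposq hle
  calc ∑' k : ℕ, ENNReal.ofReal (β/((z+(2*(k:ℝ)+2))^2 - β^2))
      ≤ ∑' k : ℕ, ENNReal.ofReal (β/2 * (1/(2*(k:ℝ)+1+z) - 1/(2*((k:ℝ)+1)+1+z))) :=
        ENNReal.tsum_le_tsum fun k => ENNReal.ofReal_le_ofReal (key k)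
    _ = ENNReal.ofReal (β/2) *
          ∑' k : ℕ, ENNReal.ofReal ((fun k : ℕ => 1/(2*(k:ℝ)+1+z)) k
            - (fun k : ℕ => 1/(2*(k:ℝ)+1+z)) (k+1)) := by
        rw [← ENNReal.tsum_mul_left]
        refine tsum_congr fun k => ?_
        rw [← ENNReal.ofReal_mul (by positivity)]
        congr 2
        push_cast
        ring
    _ ≤ ENNReal.ofReal (β/2) * ENNReal.ofReal ((fun k : ℕ => 1/(2*(k:ℝ)+1+z)) 0) := by
        gcongr
        apply tele_tsum_le
        · intro n
          have hn : (0:ℝ) ≤ (n:ℝ) := Nat.cast_nonneg n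
          apply one_div_le_one_div_of_le (by linarith)
          push_cast
          linarith
        · intro n
          have hn : (0:ℝ) ≤ (n:ℝ) := Nat.cast_nonneg n
          have : (0:ℝ) < 2*(n:ℝ)+1+z := by linarith
          positivity
    _ = ENNReal.ofReal (β/2 * (1/(1+z))) := by
        rw [← ENNReal.ofReal_mul (by positivity)]
        norm_num

lemma sumB (β : ℝ) (hβ0 : 0 < β) (hβ1 : β < 1) (y : ℝ) (hy : y ∈ Set.Ioo (-1:ℝ) 1) :
    ∑' k : ℕ, (ENNReal.ofReal (β/((y+(2*(k:ℝ)+2))^2 - β^2))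
        + ENNReal.ofReal (β/((y-(2*(k:ℝ)+2))^2 - β^2)))
      ≤ ENNReal.ofReal β * ENNReal.ofReal (1/(1-y^2)) := by
  obtain ⟨hy1, hy2⟩ := hy
  rw [ENNReal.tsum_add]
  have h2 : ∑' k : ℕ, ENNReal.ofReal (β/((y-(2*(k:ℝ)+2))^2 - β^2))
      = ∑' k : ℕ, ENNReal.ofReal (β/((-y+(2*(k:ℝ)+2))^2 - β^2)) := by
    refine tsum_congr fun k => ?_
    congr 3
    ring
  rw [h2]
  refine le_trans (add_le_add (sumB_half β hβ0 hβ1 y hy1)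
    (sumB_half β hβ0 hβ1 (-y) (by linarith))) (le_of_eq ?_)
  calc ENNReal.ofReal (β/2 * (1/(1+y))) + ENNReal.ofReal (β/2 * (1/(1+(-y))))
      = ENNReal.ofReal (β * (1/(1-y^2))) := by
        have hny : (0:ℝ) < 1 - y := by linarith
        have hpy : (0:ℝ) < 1 + y := by linarith
        have hsq : (0:ℝ) < 1 - y^2 := by nlinarith
        rw [← ENNReal.ofReal_add (by positivity) (by positivity)]
        congr 1
        have h1 : (1:ℝ) + y ≠ 0 := hpy.ne'
        have h2 : (1:ℝ) + -y ≠ 0 := by intro h; apply hny.ne'; linarith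
        have h3 : (1:ℝ) - y^2 ≠ 0 := hsq.ne'
        field_simp
        ring
    _ = ENNReal.ofReal β * ENNReal.ofReal (1/(1-y^2)) := ENNReal.ofReal_mul hβ0.le

lemma branchB (β : ℝ) (hβ0 : 0 < β) (hβ1 : β < 1) (A : Set ℝ) (hA : MeasurableSet A)
    (hA1 : A ⊆ Set.Ioo (-1) 1) (d : ℝ) (hd : 2 ≤ |d|) :
    ∫⁻ x in (fun y => -β/(y+d)) '' A, ENNReal.ofReal (1/(1-x^2))
      = ∫⁻ y in A, ENNReal.ofReal (β/((y+d)^2 - β^2)) := by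
  have habs : ∀ y ∈ A, 1 < |y+d| := by
    intro y hy
    have h1 : |y| < 1 := abs_lt.2 ⟨(hA1 hy).1, (hA1 hy).2⟩
    have h2 := abs_sub_abs_le_abs_sub d (-y)
    rw [abs_neg, sub_neg_eq_add] at h2
    have h3 : |d + y| = |y + d| := by rw [add_comm]
    rw [h3] at h2
    linarith
  have hne : ∀ y ∈ A, y+d ≠ 0 := by
    intro y hy
    intro h
    have := habs y hy
    rw [h] at this
    norm_num at this
  have hsq : ∀ y ∈ A, 1 < (y+d)^2 := by
    intro y hy
    have := habs y hy
    nlinarith [abs_nonneg (y+d), sq_abs (y+d)]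
  have hderiv : ∀ y ∈ A, HasDerivWithinAt (fun y => -β/(y+d)) (β/((y+d)^2)) A y := by
    intro y hy
    have h := (hasDerivAt_const y (-β)).div ((hasDerivAt_id y).add_const d) (hne y hy)
    simp only [id] at h
    have heq : (0 * (y+d) - (-β) * 1) / (y+d)^2 = β/((y+d)^2) := by ring
    rw [heq] at h
    exact h.hasDerivWithinAt
  have hinj : Set.InjOn (fun y => -β/(y+d)) A := by
    intro y1 h1 y2 h2 h
    simp only at h
    rw [div_eq_div_iff (hne y1 h1) (hne y2 h2)] at h
    have := mul_left_cancel₀ (neg_ne_zero.2 (ne_of_gt hβ0)) h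
    linarith
  rw [lintegral_image_1d hA hderiv hinj]
  refine setLIntegral_congr_fun hA (fun y hy => ?_)
  have h1 := hsq y hy
  have h2 := hne y hy
  have habs2 : |β/((y+d)^2)| = β/((y+d)^2) := by
    rw [abs_of_pos]
    have : (0:ℝ) < (y+d)^2 := by positivity
    positivity
  rw [habs2, ← ENNReal.ofReal_mul (by positivity)]
  congr 1
  have hne2 : 1 - (-β/(y+d))^2 ≠ 0 := by
    have : (-β/(y+d))^2 = β^2/(y+d)^2 := by rw [div_pow, neg_sq]
    rw [this]
    have hb2 : β^2 < (y+d)^2 := by nlinarith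
    have : β^2/(y+d)^2 < 1 := (div_lt_one (by positivity)).2 hb2
    linarith
  field_simp

lemma keyB (β : ℝ) (hβ0 : 0 < β) (hβ1 : β < 1) (A : Set ℝ) (hA : MeasurableSet A)
    (hA1 : A ⊆ Set.Ioo (-1) 1) :
    ∫⁻ x in {x | x ∈ Set.Ioo (-β) β ∧ x ≠ 0 ∧ tauMap β x ∈ A}, ENNReal.ofReal (1/(1-x^2))
      ≤ ENNReal.ofReal β * ∫⁻ y in A, ENNReal.ofReal (1/(1-y^2)) := by
  have hmeasp : ∀ k : ℕ, Measurable (fun y : ℝ => ENNReal.ofReal (β/((y+(2*(k:ℝ)+2))^2 - β^2))) :=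
    fun k => Measurable.ennreal_ofReal (measurable_const.div
      (((measurable_id.add_const _).pow_const 2).sub measurable_const))
  have hmeasm : ∀ k : ℕ, Measurable (fun y : ℝ => ENNReal.ofReal (β/((y-(2*(k:ℝ)+2))^2 - β^2))) :=
    fun k => Measurable.ennreal_ofReal (measurable_const.div
      (((measurable_id.sub_const _).pow_const 2).sub measurable_const))
  have hneg : ∀ k : ℕ, (fun y : ℝ => -β/(y-(2*(k:ℝ)+2))) = (fun y : ℝ => -β/(y+(-(2*(k:ℝ)+2)))) := by
    intro k; funext y; rw [sub_eq_add_neg]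
  calc ∫⁻ x in {x | x ∈ Set.Ioo (-β) β ∧ x ≠ 0 ∧ tauMap β x ∈ A}, ENNReal.ofReal (1/(1-x^2))
      ≤ ∫⁻ x in ⋃ k : ℕ, ((fun y => -β/(y+(2*(k:ℝ)+2))) '' A ∪ (fun y => -β/(y-(2*(k:ℝ)+2))) '' A),
          ENNReal.ofReal (1/(1-x^2)) := lintegral_mono_set (preB β hβ0 A)
    _ ≤ ∑' k : ℕ, ∫⁻ x in ((fun y => -β/(y+(2*(k:ℝ)+2))) '' A ∪ (fun y => -β/(y-(2*(k:ℝ)+2))) '' A),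
          ENNReal.ofReal (1/(1-x^2)) := lintegral_iUnion_le _ _
    _ ≤ ∑' k : ℕ, ((∫⁻ x in (fun y => -β/(y+(2*(k:ℝ)+2))) '' A, ENNReal.ofReal (1/(1-x^2)))
          + ∫⁻ x in (fun y => -β/(y-(2*(k:ℝ)+2))) '' A, ENNReal.ofReal (1/(1-x^2))) :=
        ENNReal.tsum_le_tsum fun k => lintegral_union_le _ _ _
    _ = ∑' k : ℕ, ∫⁻ y in A, (ENNReal.ofReal (β/((y+(2*(k:ℝ)+2))^2 - β^2))
          + ENNReal.ofReal (β/((y-(2*(k:ℝ)+2))^2 - β^2))) := by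
        refine tsum_congr fun k => ?_
        have hk2 : (2:ℝ) ≤ |2*(k:ℝ)+2| := by
          rw [abs_of_pos (by positivity)]
          have : (0:ℝ) ≤ (k:ℝ) := Nat.cast_nonneg k
          linarith
        have hk2' : (2:ℝ) ≤ |(-(2*(k:ℝ)+2))| := by rwa [abs_neg]
        rw [lintegral_add_left (hmeasp k)]
        congr 1
        · exact branchB β hβ0 hβ1 A hA hA1 _ hk2
        · rw [hneg k, branchB β hβ0 hβ1 A hA hA1 _ hk2']
          refine setLIntegral_congr_fun hA (fun y hy => ?_)
          congr 2
    _ = ∫⁻ y in A, ∑' k : ℕ, (ENNReal.ofReal (β/((y+(2*(k:ℝ)+2))^2 - β^2))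
          + ENNReal.ofReal (β/((y-(2*(k:ℝ)+2))^2 - β^2))) :=
        (lintegral_tsum fun k => ((hmeasp k).add (hmeasm k)).aemeasurable).symm
    _ ≤ ∫⁻ y in A, ENNReal.ofReal β * ENNReal.ofReal (1/(1-y^2)) := by
        refine lintegral_mono_ae ((ae_restrict_iff' hA).2 (ae_of_all _ fun y hy => ?_))
        exact sumB β hβ0 hβ1 y (hA1 hy)
    _ = ENNReal.ofReal β * ∫⁻ y in A, ENNReal.ofReal (1/(1-y^2)) :=
        lintegral_const_mul' _ _ ENNReal.ofReal_ne_top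

lemma measurable_tauMap (β : ℝ) : Measurable (tauMap β) := by
  have h1 : Measurable (fun x : ℝ => -β / x) := measurable_const.div measurable_id
  apply h1.sub
  apply Measurable.const_mul
  have h2 : Measurable (fun x : ℝ => ⌈((-β / x) - 1) / 2⌉) :=
    ((h1.sub_const 1).div_const 2).ceil
  exact (measurable_from_top (α := ℤ)).comp h2

lemma measEset (β : ℝ) (N : ℕ) : MeasurableSet (Eset β N) := by
  have : Eset β N = Set.Ioo (-β) β ∩ ⋂ (n : ℕ), ⋂ (_ : n ≤ N-1),
      (((tauMap β)^[n] ⁻¹' {(0:ℝ)}ᶜ) ∩ ⋂ (_ : 1 ≤ n), (tauMap β)^[n] ⁻¹' (Set.Ioo (-β) β)) := by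
    ext x
    simp only [Eset, Set.mem_setOf_eq, Set.mem_inter_iff, Set.mem_iInter, Set.mem_preimage,
      Set.mem_compl_iff, Set.mem_singleton_iff]
  rw [this]
  refine measurableSet_Ioo.inter (MeasurableSet.iInter fun n => MeasurableSet.iInter fun _ => ?_)
  refine MeasurableSet.inter ?_ (MeasurableSet.iInter fun _ => ?_)
  · exact ((measurable_tauMap β).iterate n) (measurableSet_singleton 0).compl
  · exact ((measurable_tauMap β).iterate n) measurableSet_Ioo

lemma Eset_subset (β : ℝ) (N : ℕ) : Eset β N ⊆ Set.Ioo (-β) β := fun _ hx => hx.1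

lemma Eset_succ (β : ℝ) (N : ℕ) (hN : 1 ≤ N) :
    Eset β (N+1) = {x | x ∈ Set.Ioo (-β) β ∧ x ≠ 0 ∧ tauMap β x ∈ Eset β N} := by
  ext x
  simp only [Eset, Set.mem_setOf_eq]
  constructor
  · rintro ⟨hx, h⟩
    have h0 : x ≠ 0 := by simpa using (h 0 (by omega)).1
    have h1 : tauMap β x ∈ Set.Ioo (-β) β := by
      simpa using (h 1 (by omega)).2 le_rfl
    refine ⟨hx, h0, h1, fun n hn => ?_⟩
    constructor
    · rw [← Function.iterate_succ_apply]
      exact (h (n+1) (by omega)).1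
    · intro hn1
      rw [← Function.iterate_succ_apply]
      exact (h (n+1) (by omega)).2 (by omega)
  · rintro ⟨hx, h0, hτIoo, h⟩
    refine ⟨hx, fun n hn => ?_⟩
    rcases Nat.eq_zero_or_pos n with rfl | hn1
    · exact ⟨by simpa using h0, by omega⟩
    obtain ⟨m, rfl⟩ : ∃ m, n = m + 1 := ⟨n-1, by omega⟩
    rw [Function.iterate_succ_apply]
    constructor
    · exact (h m (by omega)).1
    · intro _
      rcases Nat.eq_zero_or_pos m with rfl | hm
      · simpa using hτIoo
      · exact (h m (by omega)).2 hm

lemma boundB (β : ℝ) (hβ0 : 0 < β) (hβ1 : β < 1) :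
    ∀ N : ℕ, 1 ≤ N → ∫⁻ t in Eset β N, ENNReal.ofReal (1/(1-t^2))
      ≤ ENNReal.ofReal β ^ N * ENNReal.ofReal (2/(1-β^2)) := by
  have hb2 : (0:ℝ) < 1 - β^2 := by nlinarith
  intro N
  induction N with
  | zero => omega
  | succ N ih =>
    intro _
    rcases Nat.eq_zero_or_pos N with rfl | hN'
    · calc ∫⁻ t in Eset β 1, ENNReal.ofReal (1/(1-t^2))
          ≤ ∫⁻ t in Set.Ioo (-β) β, ENNReal.ofReal (1/(1-t^2)) :=
            lintegral_mono_set (Eset_subset β 1)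
        _ ≤ ∫⁻ _ in Set.Ioo (-β) β, ENNReal.ofReal (1/(1-β^2)) := by
            refine lintegral_mono_ae ((ae_restrict_iff' measurableSet_Ioo).2
              (ae_of_all _ fun x hx => ?_))
            apply ENNReal.ofReal_le_ofReal
            apply one_div_le_one_div_of_le hb2
            nlinarith [hx.1, hx.2]
        _ = ENNReal.ofReal (1/(1-β^2)) * volume (Set.Ioo (-β) β) := setLIntegral_const _ _
        _ = ENNReal.ofReal β ^ 1 * ENNReal.ofReal (2/(1-β^2)) := by
            rw [Real.volume_Ioo, pow_one, ← ENNReal.ofReal_mul (by positivity),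
              ← ENNReal.ofReal_mul hβ0.le]
            congr 1
            rw [sub_neg_eq_add]
            field_simp
            ring
    · rw [Eset_succ β N hN']
      calc ∫⁻ t in {x | x ∈ Set.Ioo (-β) β ∧ x ≠ 0 ∧ tauMap β x ∈ Eset β N},
            ENNReal.ofReal (1/(1-t^2))
          ≤ ENNReal.ofReal β * ∫⁻ y in Eset β N, ENNReal.ofReal (1/(1-y^2)) :=
            keyB β hβ0 hβ1 _ (measEset β N)
              ((Eset_subset β N).trans (Set.Ioo_subset_Ioo (by linarith) hβ1.le))
        _ ≤ ENNReal.ofReal β * (ENNReal.ofReal β ^ N * ENNReal.ofReal (2/(1-β^2))) := by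
            gcongr
            exact ih hN'
        _ = ENNReal.ofReal β ^ (N+1) * ENNReal.ofReal (2/(1-β^2)) := by
            rw [pow_succ]; ring

/-- Geometric decay of the measures of `Fset γ N`, `Eset β N`, and nullity of
the wandering sets. -/
theorem stmt_18 (β γ : ℝ) (hβ0 : 0 < β) (hβ1 : β < 1) (hγ0 : 0 < γ) (hγ1 : γ < 1) :
    (∀ N : ℕ, 1 ≤ N →
      (∫ t in Fset γ N, 1 / (1 + t)) ≤ (2 * γ / (1 + γ)) ^ N * Real.log 2) ∧
    (∀ N : ℕ, 1 ≤ N →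
      (∫ t in Eset β N, 1 / (1 - t ^ 2)) ≤ 4 * β ^ N / (1 - β)) ∧
    volume (⋂ N : ℕ, Fset γ (N + 1)) = 0 ∧
    volume (⋂ N : ℕ, Eset β (N + 1)) = 0 := by
  have hβ2 : (0:ℝ) < 1 - β^2 := by nlinarith
  have hlog2 : (0:ℝ) ≤ Real.log 2 := Real.log_nonneg one_le_two
  have hc0 : (0:ℝ) ≤ 2*γ/(1+γ) := by positivity
  -- part (a)
  have partA : ∀ N : ℕ, 1 ≤ N →
      (∫ t in Fset γ N, 1 / (1 + t)) ≤ (2 * γ / (1 + γ)) ^ N * Real.log 2 := by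
    intro N hN
    have heq : ∫ t in Fset γ N, 1 / (1 + t)
        = (∫⁻ t in Fset γ N, ENNReal.ofReal (1/(1+t))).toReal := by
      rw [integral_eq_lintegral_of_nonneg_ae]
      · exact (ae_restrict_iff' (measFset γ N)).2 (ae_of_all _ fun x hx => by
          have hx1 := (Fset_subset γ N hx).1
          positivity)
      · exact (measurable_const.div (measurable_const.add measurable_id)).aestronglyMeasurable
    rw [heq]
    apply ENNReal.toReal_le_of_le_ofReal (by positivity)
    calc ∫⁻ t in Fset γ N, ENNReal.ofReal (1/(1+t))
        ≤ ENNReal.ofReal (2*γ/(1+γ)) ^ N * ENNReal.ofReal (Real.log 2) :=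
          boundA γ hγ0 hγ1 N hN
      _ = ENNReal.ofReal ((2*γ/(1+γ)) ^ N * Real.log 2) := by
          rw [← ENNReal.ofReal_pow hc0, ← ENNReal.ofReal_mul (by positivity)]
  -- part (b)
  have partB : ∀ N : ℕ, 1 ≤ N →
      (∫ t in Eset β N, 1 / (1 - t ^ 2)) ≤ 4 * β ^ N / (1 - β) := by
    intro N hN
    have heq : ∫ t in Eset β N, 1 / (1 - t ^ 2)
        = (∫⁻ t in Eset β N, ENNReal.ofReal (1/(1-t^2))).toReal := by
      rw [integral_eq_lintegral_of_nonneg_ae]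
      · refine (ae_restrict_iff' (measEset β N)).2 (ae_of_all _ fun x hx => ?_)
        have hx1 := (Eset_subset β N hx).1
        have hx2 := (Eset_subset β N hx).2
        have : (0:ℝ) < 1 - x^2 := by nlinarith
        positivity
      · exact (measurable_const.div
          (measurable_const.sub (measurable_id.pow_const 2))).aestronglyMeasurable
    rw [heq]
    have h1β : (0:ℝ) < 1 - β := by linarith
    apply ENNReal.toReal_le_of_le_ofReal (div_nonneg (by positivity) h1β.le)
    calc ∫⁻ t in Eset β N, ENNReal.ofReal (1/(1-t^2))
        ≤ ENNReal.ofReal β ^ N * ENNReal.ofReal (2/(1-β^2)) := boundB β hβ0 hβ1 N hN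
      _ = ENNReal.ofReal (β ^ N * (2/(1-β^2))) := by
          rw [← ENNReal.ofReal_pow hβ0.le, ← ENNReal.ofReal_mul (by positivity)]
      _ ≤ ENNReal.ofReal (4 * β ^ N / (1 - β)) := by
          apply ENNReal.ofReal_le_ofReal
          rw [mul_div_assoc' , div_le_div_iff₀ hβ2 (by linarith)]
          nlinarith [mul_nonneg (mul_nonneg (pow_pos hβ0 N).le
            (by linarith : (0:ℝ) ≤ 1 - β)) (by linarith : (0:ℝ) ≤ 4*β+2)]
  refine ⟨partA, partB, ?_, ?_⟩
  -- part (c) for F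
  · have hvol : ∀ N : ℕ, volume (⋂ M : ℕ, Fset γ (M+1))
        ≤ ENNReal.ofReal (2 * ((2*γ/(1+γ)) ^ (N+1) * Real.log 2)) := by
      intro N
      calc volume (⋂ M : ℕ, Fset γ (M+1)) ≤ volume (Fset γ (N+1)) :=
            measure_mono (Set.iInter_subset _ N)
        _ = ∫⁻ _ in Fset γ (N+1), 1 := (setLIntegral_one _).symm
        _ ≤ ∫⁻ t in Fset γ (N+1), ENNReal.ofReal 2 * ENNReal.ofReal (1/(1+t)) := by
            refine lintegral_mono_ae ((ae_restrict_iff' (measFset γ (N+1))).2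
              (ae_of_all _ fun x hx => ?_))
            have hx1 := (Fset_subset γ (N+1) hx).1
            have hx2 := (Fset_subset γ (N+1) hx).2
            rw [← ENNReal.ofReal_mul (by norm_num), ← ENNReal.ofReal_one]
            apply ENNReal.ofReal_le_ofReal
            rw [mul_one_div, le_div_iff₀ (by linarith)]
            linarith
        _ = ENNReal.ofReal 2 * ∫⁻ t in Fset γ (N+1), ENNReal.ofReal (1/(1+t)) :=
            lintegral_const_mul' _ _ ENNReal.ofReal_ne_top
        _ ≤ ENNReal.ofReal 2 * (ENNReal.ofReal (2*γ/(1+γ)) ^ (N+1)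
              * ENNReal.ofReal (Real.log 2)) := by
            gcongr
            exact boundA γ hγ0 hγ1 (N+1) (by omega)
        _ = ENNReal.ofReal (2 * ((2*γ/(1+γ)) ^ (N+1) * Real.log 2)) := by
            rw [← ENNReal.ofReal_pow hc0, ← ENNReal.ofReal_mul (by positivity),
              ← ENNReal.ofReal_mul (by norm_num)]
    have hlim : Filter.Tendsto
        (fun N : ℕ => ENNReal.ofReal (2 * ((2*γ/(1+γ)) ^ (N+1) * Real.log 2)))
        Filter.atTop (nhds 0) := by
      rw [← ENNReal.ofReal_zero]
      apply ENNReal.tendsto_ofReal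
      have hc1 : |2*γ/(1+γ)| < 1 := by
        rw [abs_of_nonneg hc0, div_lt_one (by positivity)]
        linarith
      have h1 := tendsto_pow_atTop_nhds_zero_of_abs_lt_one hc1
      have h2 := h1.comp (Filter.tendsto_add_atTop_nat 1)
      have h3 := (h2.mul_const (Real.log 2)).const_mul 2
      simpa using h3
    exact le_antisymm (ge_of_tendsto' hlim hvol) zero_le
  -- part (c) for E
  · have hvol : ∀ N : ℕ, volume (⋂ M : ℕ, Eset β (M+1))
        ≤ ENNReal.ofReal (β ^ (N+1) * (2/(1-β^2))) := by
      intro N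
      calc volume (⋂ M : ℕ, Eset β (M+1)) ≤ volume (Eset β (N+1)) :=
            measure_mono (Set.iInter_subset _ N)
        _ = ∫⁻ _ in Eset β (N+1), 1 := (setLIntegral_one _).symm
        _ ≤ ∫⁻ t in Eset β (N+1), ENNReal.ofReal (1/(1-t^2)) := by
            refine lintegral_mono_ae ((ae_restrict_iff' (measEset β (N+1))).2
              (ae_of_all _ fun x hx => ?_))
            have hx1 := (Eset_subset β (N+1) hx).1
            have hx2 := (Eset_subset β (N+1) hx).2
            have hpos : (0:ℝ) < 1 - x^2 := by nlinarith
            rw [← ENNReal.ofReal_one]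
            apply ENNReal.ofReal_le_ofReal
            rw [le_div_iff₀ hpos, one_mul]
            nlinarith [sq_nonneg x]
        _ ≤ ENNReal.ofReal β ^ (N+1) * ENNReal.ofReal (2/(1-β^2)) :=
            boundB β hβ0 hβ1 (N+1) (by omega)
        _ = ENNReal.ofReal (β ^ (N+1) * (2/(1-β^2))) := by
            rw [← ENNReal.ofReal_pow hβ0.le, ← ENNReal.ofReal_mul (by positivity)]
    have hlim : Filter.Tendsto
        (fun N : ℕ => ENNReal.ofReal (β ^ (N+1) * (2/(1-β^2))))
        Filter.atTop (nhds 0) := by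
      rw [← ENNReal.ofReal_zero]
      apply ENNReal.tendsto_ofReal
      have hc1 : |β| < 1 := by rw [abs_of_pos hβ0]; exact hβ1
      have h1 := tendsto_pow_atTop_nhds_zero_of_abs_lt_one hc1
      have h2 := h1.comp (Filter.tendsto_add_atTop_nat 1)
      have h3 := h2.mul_const (2/(1-β^2))
      simpa using h3
    exact le_antisymm (ge_of_tendsto' hlim hvol) zero_le
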